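/- Let u, v: ℝ₊ → ℝ₊ be strictly increasing, twice continuously differentiable with u''(x)/u'(x) ≤ v''(x)/v'(x) for all x ≥ 0. Then for every nonnegative random variable X (with the relevant integrability), u⁻¹(E[u(X)]) ≤ v⁻¹(E[v(X)]) (Arrow–Pratt comparison of certainty equivalents). -/

import Mathlib

open Set Filter MeasureTheory

noncomputable section

/-- Attainment: the mean of `w ∘ X` is attained by `w` on `Ici 0`. -/
lemma mean_attained {Ω : Type*} [MeasurableSpace Ω] (μ : Measure Ω) [IsProbabilityMeasure μ]
    (w : ℝ → ℝ) (hwm : MonotoneOn w (Ici 0)) (hwc : ContinuousOn w (Ici 0))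
    (X : Ω → ℝ) (hXpos : ∀ ω, 0 ≤ X ω)
    (hwX : Integrable (fun ω => w (X ω)) μ) :
    ∃ c ∈ Ici (0 : ℝ), w c = ∫ ω, w (X ω) ∂μ := by
  set m := ∫ ω, w (X ω) ∂μ with hm
  have hw0 : w 0 ≤ m := by
    have : ∫ (_ : Ω), w 0 ∂μ ≤ m :=
      integral_mono (integrable_const _) hwX fun ω =>
        hwm (le_refl (0:ℝ)) (hXpos ω) (hXpos ω)
    simpa using this
  by_cases hex : ∃ x ∈ Ici (0:ℝ), m ≤ w x
  · obtain ⟨x, hx, hmx⟩ := hex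
    have hsub : Icc (w 0) (w x) ⊆ w '' Icc 0 x :=
      intermediate_value_Icc hx (hwc.mono (Icc_subset_Ici_self))
    obtain ⟨c, hc, hcm⟩ := hsub ⟨hw0, hmx⟩
    exact ⟨c, hc.1, hcm⟩
  · exfalso
    push_neg at hex
    have hlt : ∀ ω, w (X ω) < m := fun ω => hex _ (hXpos ω)
    have hint : Integrable (fun ω => m - w (X ω)) μ := (integrable_const m).sub hwX
    have hzero : ∫ ω, (m - w (X ω)) ∂μ = 0 := by
      rw [integral_sub (integrable_const m) hwX]
      simp [hm]
    have hae : (fun ω => m - w (X ω)) =ᵐ[μ] 0 :=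
      (integral_eq_zero_iff_of_nonneg (fun ω => sub_nonneg.2 (hlt ω).le) hint).1 hzero
    have : NeBot (ae μ) := ae_neBot.2 (IsProbabilityMeasure.ne_zero μ)
    obtain ⟨ω, hω⟩ := hae.exists
    simp only [Pi.zero_apply, sub_eq_zero] at hω
    exact absurd hω.symm (ne_of_lt (hlt ω))

theorem certainty_equivalent_le
    {Ω : Type*} [MeasurableSpace Ω] (μ : Measure Ω) [IsProbabilityMeasure μ]
    (u v u' v' u'' v'' : ℝ → ℝ)
    (hu0 : MapsTo u (Ici 0) (Ici 0)) (hv0 : MapsTo v (Ici 0) (Ici 0))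
    (hum : StrictMonoOn u (Ici 0)) (hvm : StrictMonoOn v (Ici 0))
    (hud : ∀ x ∈ Ici (0 : ℝ), HasDerivAt u (u' x) x)
    (hud2 : ∀ x ∈ Ici (0 : ℝ), HasDerivAt u' (u'' x) x)
    (hvd : ∀ x ∈ Ici (0 : ℝ), HasDerivAt v (v' x) x)
    (hvd2 : ∀ x ∈ Ici (0 : ℝ), HasDerivAt v' (v'' x) x)
    (hu''c : ContinuousOn u'' (Ici 0)) (hv''c : ContinuousOn v'' (Ici 0))
    (hu' : ∀ x ∈ Ici (0 : ℝ), 0 < u' x) (hv' : ∀ x ∈ Ici (0 : ℝ), 0 < v' x)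
    (hratio : ∀ x ∈ Ici (0 : ℝ), u'' x / u' x ≤ v'' x / v' x)
    (X : Ω → ℝ) (hX : Measurable X) (hXpos : ∀ ω, 0 ≤ X ω)
    (huX : Integrable (fun ω => u (X ω)) μ)
    (hvX : Integrable (fun ω => v (X ω)) μ) :
    Function.invFunOn u (Ici 0) (∫ ω, u (X ω) ∂μ) ≤
      Function.invFunOn v (Ici 0) (∫ ω, v (X ω) ∂μ) := by
  have hucont : ContinuousOn u (Ici 0) := fun x hx =>
    (hud x hx).continuousAt.continuousWithinAt
  have hvcont : ContinuousOn v (Ici 0) := fun x hx =>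
    (hvd x hx).continuousAt.continuousWithinAt
  -- h = u'/v' is antitone on Ici 0
  have hderiv : ∀ x ∈ Ici (0:ℝ),
      HasDerivAt (fun y => u' y / v' y)
        ((u'' x * v' x - u' x * v'' x) / (v' x)^2) x := fun x hx =>
    (hud2 x hx).div (hvd2 x hx) (ne_of_gt (hv' x hx))
  have hanti : AntitoneOn (fun y => u' y / v' y) (Ici 0) := by
    apply antitoneOn_of_deriv_nonpos (convex_Ici 0)
    · exact fun x hx => (hderiv x hx).continuousAt.continuousWithinAt
    · intro x hx
      rw [interior_Ici] at hx
      exact ((hderiv x (mem_Ici.2 (le_of_lt (mem_Ioi.1 hx)))).differentiableAt).differentiableWithinAt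
    · intro x hx
      rw [interior_Ici] at hx
      have hx' : x ∈ Ici (0:ℝ) := mem_Ici.2 (le_of_lt (mem_Ioi.1 hx))
      rw [(hderiv x hx').deriv]
      apply div_nonpos_of_nonpos_of_nonneg _ (sq_nonneg _)
      have := (div_le_div_iff₀ (hu' x hx') (hv' x hx')).1 (hratio x hx')
      linarith
  -- the mean of v ∘ X is attained at some c
  obtain ⟨c, hc, hvc⟩ := mean_attained μ v hvm.monotoneOn hvcont X hXpos hvX
  obtain ⟨a, ha, hua⟩ := mean_attained μ u hum.monotoneOn hucont X hXpos huX
  set k := u' c / v' c with hk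
  -- pointwise tangent-line inequality
  have key : ∀ x ∈ Ici (0:ℝ), u x - u c ≤ k * (v x - v c) := by
    intro x hx
    set φ : ℝ → ℝ := fun y => k * v y - u y with hφ
    have hφd : ∀ y ∈ Ici (0:ℝ), HasDerivAt φ (k * v' y - u' y) y := fun y hy =>
      ((hvd y hy).const_mul k).sub (hud y hy)
    have hgoal : φ c ≤ φ x → u x - u c ≤ k * (v x - v c) := by
      intro h; simp only [hφ] at h; linarith
    apply hgoal
    rcases le_total c x with hcx | hxc
    · have hmono : MonotoneOn φ (Ici c) := by
        apply monotoneOn_of_deriv_nonneg (convex_Ici c)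
        · exact fun y hy => (hφd y (mem_Ici.2 (le_trans (mem_Ici.1 hc) (mem_Ici.1 hy)))).continuousAt.continuousWithinAt
        · intro y hy
          rw [interior_Ici] at hy
          exact ((hφd y (mem_Ici.2 (le_trans (mem_Ici.1 hc) (mem_Ioi.1 hy).le))).differentiableAt).differentiableWithinAt
        · intro y hy
          rw [interior_Ici] at hy
          have hy' : y ∈ Ici (0:ℝ) := mem_Ici.2 (le_trans (mem_Ici.1 hc) (mem_Ioi.1 hy).le)
          rw [(hφd y hy').deriv]
          have hle : u' y / v' y ≤ k := hanti hc hy' (mem_Ioi.1 hy).le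
          have := (div_le_iff₀ (hv' y hy')).1 hle
          linarith
      exact hmono (self_mem_Ici) hcx hcx
    · have hmono : AntitoneOn φ (Icc 0 c) := by
        apply antitoneOn_of_deriv_nonpos (convex_Icc 0 c)
        · exact fun y hy => (hφd y hy.1).continuousAt.continuousWithinAt
        · intro y hy
          rw [interior_Icc] at hy
          exact ((hφd y hy.1.le).differentiableAt).differentiableWithinAt
        · intro y hy
          rw [interior_Icc] at hy
          have hy' : y ∈ Ici (0:ℝ) := hy.1.le
          rw [(hφd y hy').deriv]
          have hle : k ≤ u' y / v' y := hanti hy' hc hy.2.le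
          have := (le_div_iff₀ (hv' y hy')).1 hle
          linarith
      exact hmono ⟨hx, hxc⟩ ⟨hc, le_refl c⟩ hxc
  -- E[u X] ≤ u c
  have hmean : ∫ ω, u (X ω) ∂μ ≤ u c := by
    have hintR : Integrable (fun ω => u c + k * (v (X ω) - v c)) μ :=
      (integrable_const _).add (((hvX.sub (integrable_const _)).const_mul k))
    have hle : ∫ ω, u (X ω) ∂μ ≤ ∫ ω, (u c + k * (v (X ω) - v c)) ∂μ :=
      integral_mono huX hintR fun ω => by
        have := key (X ω) (hXpos ω); linarith
    calc ∫ ω, u (X ω) ∂μ ≤ ∫ ω, (u c + k * (v (X ω) - v c)) ∂μ := hle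
      _ = u c := by
          have hint2 : Integrable (fun ω => k * (v (X ω) - v c)) μ := by
            exact (hvX.sub (integrable_const _)).const_mul k
          have hint3 : Integrable (fun ω => v (X ω) - v c) μ := by
            exact hvX.sub (integrable_const _)
          rw [integral_add (integrable_const _) hint2, integral_const_mul,
            integral_sub hvX (integrable_const _)]
          simp [← hvc]
  -- conclude
  have hac : a ≤ c := by
    by_contra hlt
    push_neg at hlt
    have := hum hc ha hlt
    rw [hua] at this
    exact absurd hmean (not_le.2 this)
  have h1 : Function.invFunOn u (Ici 0) (∫ ω, u (X ω) ∂μ) = a := by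
    apply hum.injOn (Function.invFunOn_mem ⟨a, ha, hua⟩) ha
    rw [Function.invFunOn_eq ⟨a, ha, hua⟩, hua]
  have h2 : Function.invFunOn v (Ici 0) (∫ ω, v (X ω) ∂μ) = c := by
    apply hvm.injOn (Function.invFunOn_mem ⟨c, hc, hvc⟩) hc
    rw [Function.invFunOn_eq ⟨c, hc, hvc⟩, hvc]
  rw [h1, h2]
  exact hac

end
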